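/- arXiv:2109.11198 — 4 statements merged into one kernel-verified Lean document; each statement's English description precedes it below -/
import Mathlib

section
/- Let G be a finite group and π a set of primes with O_π(G) ≠ 1. Consider chains C : 1 = P₀ < P₁ < … < Pₙ of π-subgroups of G (with n = 0 allowed), with length |C| = n and stabilizer G_C = ⋂ᵢ N_G(Pᵢ). Then there is an involution C ↦ C* on the set of all such chains with no fixed points, satisfying |C*| = |C| ± 1 and G_{C*} = G_C for every chain C. -/
/-- `n` is a π-number: all prime divisors lie in π. -/
def IsPiNumber (π : Set ℕ) (n : ℕ) : Prop := ∀ p : ℕ, p.Prime → p ∣ n → p ∈ π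

/-- A π-subgroup: a subgroup whose order is a π-number. -/
def IsPiSubgroup (π : Set ℕ) {G : Type*} [Group G] (P : Subgroup G) : Prop :=
  IsPiNumber π (Nat.card P)

/-- A chain 1 = P₀ < P₁ < … < Pₙ of π-subgroups of `G`, encoded by its (totally
ordered, hence strictly increasing) finite set of members, which contains ⊥. -/
structure PiChain (π : Set ℕ) (G : Type*) [Group G] where
  carrier : Finset (Subgroup G)
  bot_mem : ⊥ ∈ carrier
  isChain : IsChain (· ≤ ·) (carrier : Set (Subgroup G))
  pi : ∀ P ∈ carrier, IsPiSubgroup π P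

/-- The length |C| = n of a chain 1 = P₀ < … < Pₙ. -/
def PiChain.len {π : Set ℕ} {G : Type*} [Group G] (C : PiChain π G) : ℕ :=
  C.carrier.card - 1

/-- The stabilizer G_C = ⋂ᵢ N_G(Pᵢ) of a chain. -/
def PiChain.stab {π : Set ℕ} {G : Type*} [Group G] (C : PiChain π G) : Subgroup G :=
  ⨅ P ∈ C.carrier, Subgroup.normalizer P

instance {π : Set ℕ} {G : Type*} [Group G] [Finite G] : Finite (PiChain π G) := by
  have : Fintype G := Fintype.ofFinite G
  classical
  apply Finite.of_injective (fun C : PiChain π G => C.carrier)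
  intro C D h
  cases C; cases D; simpa using h

/-- O_π(G): the largest normal π-subgroup of `G`. -/
def piCore (π : Set ℕ) (G : Type*) [Group G] : Subgroup G :=
  ⨆ P ∈ {P : Subgroup G | P.Normal ∧ IsPiSubgroup π P}, P

/- ## Auxiliary material -/

attribute [local instance] Classical.propDecidable

open Pointwise

section Helpers

variable {G : Type*} [Group G]

lemma conj_smul_of_mem_normalizer {H : Subgroup G} {g : G}
    (hg : g ∈ Subgroup.normalizer (H : Set G)) : MulAut.conj g • H = H := by
  ext x
  rw [Subgroup.mem_pointwise_smul_iff_inv_smul_mem]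
  have := (Subgroup.mem_normalizer_iff''.mp hg x).symm
  simpa [MulAut.smul_def, mul_assoc] using this

lemma mem_normalizer_sup {H K : Subgroup G} {g : G}
    (hH : g ∈ Subgroup.normalizer (H : Set G)) (hK : g ∈ Subgroup.normalizer (K : Set G)) :
    g ∈ Subgroup.normalizer ((H ⊔ K : Subgroup G) : Set G) := by
  have hs : MulAut.conj g • (H ⊔ K) = H ⊔ K := by
    rw [Subgroup.smul_sup, conj_smul_of_mem_normalizer hH, conj_smul_of_mem_normalizer hK]
  rw [Subgroup.mem_normalizer_iff]
  intro h
  constructor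
  · intro hh
    rw [← hs]
    exact Subgroup.smul_mem_pointwise_smul h _ _ hh
  · intro hh
    rw [← hs] at hh
    rwa [show g * h * g⁻¹ = MulAut.conj g • h from rfl,
      Subgroup.smul_mem_pointwise_smul_iff] at hh

lemma card_sup_dvd (H N : Subgroup G) [hN : N.Normal] :
    Nat.card (H ⊔ N : Subgroup G) ∣ Nat.card H * Nat.card N := by
  have h1 : Nat.card (N.subgroupOf (H ⊔ N)) * (N.subgroupOf (H ⊔ N)).index
      = Nat.card (H ⊔ N : Subgroup G) := Subgroup.card_mul_index _
  have h2 : Nat.card (N.subgroupOf (H ⊔ N)) = Nat.card N :=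
    Nat.card_congr (Subgroup.subgroupOfEquivOfLe le_sup_right).toEquiv
  have h4 : (N.subgroupOf (H ⊔ N)).index = Nat.card (H ⧸ N.subgroupOf H) := by
    rw [Subgroup.index_eq_card]
    exact (Nat.card_congr (QuotientGroup.quotientInfEquivProdNormalQuotient H N).toEquiv).symm
  have h5 : Nat.card (H ⧸ N.subgroupOf H) ∣ Nat.card H := by
    rw [← Subgroup.index_eq_card]
    exact Subgroup.index_dvd_card _
  rw [← h1, h2, h4, mul_comm]
  exact Nat.mul_dvd_mul h5 dvd_rfl

end Helpers

lemma piCore_spec (π : Set ℕ) (G : Type*) [Group G] [Finite G] :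
    (piCore π G).Normal ∧ IsPiSubgroup π (piCore π G) := by
  classical
  have : Fintype (Subgroup G) := Fintype.ofFinite _
  have hrw : piCore π G =
      ({P : Subgroup G | P.Normal ∧ IsPiSubgroup π P}).toFinset.sup id := by
    rw [Finset.sup_id_eq_sSup, Set.coe_toFinset, piCore, sSup_eq_iSup]
  rw [hrw]
  refine Finset.sup_induction (p := fun K : Subgroup G => K.Normal ∧ IsPiSubgroup π K)
    ?_ ?_ ?_
  · refine ⟨inferInstance, fun p hp hdvd => ?_⟩
    have h1 : Nat.card (⊥ : Subgroup G) = 1 := by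
      simp [Nat.card_eq_one_iff_unique]
    rw [h1] at hdvd
    exact absurd (Nat.eq_one_of_dvd_one hdvd) hp.ne_one
  · rintro a ⟨ha1, ha2⟩ b ⟨hb1, hb2⟩
    haveI := ha1; haveI := hb1
    refine ⟨Subgroup.sup_normal a b, fun p hp hdvd => ?_⟩
    have hd : p ∣ Nat.card a * Nat.card b := hdvd.trans (card_sup_dvd a b)
    rcases hp.dvd_mul.mp hd with h | h
    · exact ha2 p hp h
    · exact hb2 p hp h
  · intro P hP
    simpa using (Set.mem_toFinset.mp hP)

section ChainOps

variable {π : Set ℕ} {G : Type*} [Group G] (O : Subgroup G)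

lemma PiChain.ext' {C D : PiChain π G} (h : C.carrier = D.carrier) : C = D := by
  cases C; cases D; simp only at h; subst h; rfl

/-- The members of the chain not containing `O`. -/
noncomputable def PiChain.lower (C : PiChain π G) : Finset (Subgroup G) :=
  C.carrier.filter (fun P => ¬ O ≤ P)

/-- The largest member of the chain not containing `O`. -/
noncomputable def PiChain.bnd (C : PiChain π G) : Subgroup G := (C.lower O).sup id

variable {O}

lemma PiChain.lower_subset (C : PiChain π G) : C.lower O ⊆ C.carrier :=
  Finset.filter_subset _ _

lemma PiChain.bot_mem_lower (hO : O ≠ ⊥) (C : PiChain π G) : ⊥ ∈ C.lower O :=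
  Finset.mem_filter.mpr ⟨C.bot_mem, fun hle => hO (le_bot_iff.mp hle)⟩

lemma PiChain.le_bnd (C : PiChain π G) {P : Subgroup G} (hP : P ∈ C.lower O) :
    P ≤ C.bnd O := Finset.le_sup (f := id) hP

lemma PiChain.bnd_mem (hO : O ≠ ⊥) (C : PiChain π G) : C.bnd O ∈ C.lower O := by
  obtain ⟨m, hm, hmax⟩ := (C.lower O).exists_maximal ⟨⊥, C.bot_mem_lower hO⟩
  have hub : ∀ P ∈ C.lower O, P ≤ m := by
    intro P hP
    rcases eq_or_ne P m with rfl | hne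
    · exact le_rfl
    rcases C.isChain (C.lower_subset hP) (C.lower_subset hm) hne with h | h
    · exact h
    · exact absurd (le_antisymm (hmax hP h) h) hne
  have : C.bnd O = m := le_antisymm (Finset.sup_le hub) (Finset.le_sup (f := id) hm)
  rw [this]; exact hm

lemma PiChain.bnd_mem_carrier (hO : O ≠ ⊥) (C : PiChain π G) : C.bnd O ∈ C.carrier :=
  C.lower_subset (C.bnd_mem hO)

lemma PiChain.not_le_bnd (hO : O ≠ ⊥) (C : PiChain π G) : ¬ O ≤ C.bnd O :=
  (Finset.mem_filter.mp (C.bnd_mem hO)).2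

lemma PiChain.sup_le_of_upper (hO : O ≠ ⊥) (C : PiChain π G) {P : Subgroup G}
    (hP : P ∈ C.carrier) (hOP : O ≤ P) : O ⊔ C.bnd O ≤ P := by
  have hb : C.bnd O ≤ P := by
    rcases eq_or_ne (C.bnd O) P with heq | hne
    · exact heq.le
    rcases C.isChain (C.bnd_mem_carrier hO) hP hne with h | h
    · exact h
    · exact absurd (hOP.trans h) (C.not_le_bnd hO)
  exact sup_le hOP hb

lemma PiChain.sup_bnd_ne_bot (hO : O ≠ ⊥) (C : PiChain π G) : O ⊔ C.bnd O ≠ ⊥ :=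
  fun h => hO (le_bot_iff.mp (h ▸ le_sup_left))

/-- The paired chain: toggle the member `O ⊔ C.bnd O`. -/
noncomputable def PiChain.next (hO : O ≠ ⊥) (hN : O.Normal) (hOpi : IsPiSubgroup π O)
    (C : PiChain π G) : PiChain π G :=
  if hR : O ⊔ C.bnd O ∈ C.carrier then
    { carrier := C.carrier.erase (O ⊔ C.bnd O)
      bot_mem := Finset.mem_erase.mpr ⟨(C.sup_bnd_ne_bot hO).symm, C.bot_mem⟩
      isChain := fun a ha b hb hne =>
        C.isChain (Finset.erase_subset _ _ ha) (Finset.erase_subset _ _ hb) hne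
      pi := fun P hP => C.pi P (Finset.mem_erase.mp hP).2 }
  else
    { carrier := insert (O ⊔ C.bnd O) C.carrier
      bot_mem := Finset.mem_insert_of_mem C.bot_mem
      isChain := by
        rw [Finset.coe_insert]
        refine C.isChain.insert fun P hP hne => ?_
        by_cases hOP : O ≤ P
        · exact Or.inl (C.sup_le_of_upper hO hP hOP)
        · exact Or.inr ((C.le_bnd (Finset.mem_filter.mpr ⟨hP, hOP⟩)).trans le_sup_right)
      pi := by
        intro P hP
        rcases Finset.mem_insert.mp hP with rfl | hP
        · intro p hp hdvd
          have hcard : Nat.card (O ⊔ C.bnd O : Subgroup G)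
              ∣ Nat.card (C.bnd O) * Nat.card O := by
            rw [sup_comm]
            exact card_sup_dvd (C.bnd O) O
          rcases hp.dvd_mul.mp (hdvd.trans hcard) with h | h
          · exact C.pi _ (C.bnd_mem_carrier hO) p hp h
          · exact hOpi p hp h
        · exact C.pi P hP }

variable (hO : O ≠ ⊥) (hN : O.Normal) (hOpi : IsPiSubgroup π O)

lemma PiChain.next_carrier_pos {C : PiChain π G} (hR : O ⊔ C.bnd O ∈ C.carrier) :
    (C.next hO hN hOpi).carrier = C.carrier.erase (O ⊔ C.bnd O) := by
  rw [PiChain.next, dif_pos hR]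

lemma PiChain.next_carrier_neg {C : PiChain π G} (hR : O ⊔ C.bnd O ∉ C.carrier) :
    (C.next hO hN hOpi).carrier = insert (O ⊔ C.bnd O) C.carrier := by
  rw [PiChain.next, dif_neg hR]

lemma PiChain.lower_next (C : PiChain π G) :
    (C.next hO hN hOpi).lower O = C.lower O := by
  by_cases hR : O ⊔ C.bnd O ∈ C.carrier
  · rw [PiChain.lower, C.next_carrier_pos hO hN hOpi hR]
    ext x
    simp only [Finset.mem_filter, Finset.mem_erase, PiChain.lower]
    constructor
    · rintro ⟨⟨-, hx⟩, h2⟩; exact ⟨hx, h2⟩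
    · rintro ⟨hx, h2⟩
      exact ⟨⟨fun h => h2 (h ▸ le_sup_left), hx⟩, h2⟩
  · rw [PiChain.lower, C.next_carrier_neg hO hN hOpi hR, Finset.filter_insert,
      if_neg (by simp only [not_not]; exact le_sup_left)]
    rfl

lemma PiChain.bnd_next (C : PiChain π G) :
    (C.next hO hN hOpi).bnd O = C.bnd O := by
  rw [PiChain.bnd, PiChain.bnd, C.lower_next hO hN hOpi]

lemma PiChain.next_next (C : PiChain π G) :
    (C.next hO hN hOpi).next hO hN hOpi = C := by
  apply PiChain.ext'
  have hb := C.bnd_next hO hN hOpi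
  by_cases hR : O ⊔ C.bnd O ∈ C.carrier
  · have h1 := C.next_carrier_pos hO hN hOpi hR
    have hR' : O ⊔ (C.next hO hN hOpi).bnd O ∉ (C.next hO hN hOpi).carrier := by
      rw [hb, h1]
      exact fun h => (Finset.mem_erase.mp h).1 rfl
    rw [PiChain.next_carrier_neg hO hN hOpi hR', hb, h1, Finset.insert_erase hR]
  · have h1 := C.next_carrier_neg hO hN hOpi hR
    have hR' : O ⊔ (C.next hO hN hOpi).bnd O ∈ (C.next hO hN hOpi).carrier := by
      rw [hb, h1]; exact Finset.mem_insert_self _ _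
    rw [PiChain.next_carrier_pos hO hN hOpi hR', hb, h1, Finset.erase_insert hR]

lemma PiChain.next_ne (C : PiChain π G) : C.next hO hN hOpi ≠ C := by
  intro heq
  have hc := congrArg PiChain.carrier heq
  by_cases hR : O ⊔ C.bnd O ∈ C.carrier
  · rw [C.next_carrier_pos hO hN hOpi hR] at hc
    exact (Finset.mem_erase.mp (hc ▸ hR)).1 rfl
  · rw [C.next_carrier_neg hO hN hOpi hR] at hc
    exact hR (hc ▸ Finset.mem_insert_self _ _)

lemma PiChain.next_len (C : PiChain π G) :
    (C.next hO hN hOpi).len = C.len + 1 ∨ C.len = (C.next hO hN hOpi).len + 1 := by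
  by_cases hR : O ⊔ C.bnd O ∈ C.carrier
  · right
    have h2 : 1 < C.carrier.card :=
      Finset.one_lt_card.mpr ⟨⊥, C.bot_mem, _, hR, (C.sup_bnd_ne_bot hO).symm⟩
    rw [PiChain.len, PiChain.len, C.next_carrier_pos hO hN hOpi hR,
      Finset.card_erase_of_mem hR]
    omega
  · left
    have h1 : 0 < C.carrier.card := Finset.card_pos.mpr ⟨⊥, C.bot_mem⟩
    rw [PiChain.len, PiChain.len, C.next_carrier_neg hO hN hOpi hR,
      Finset.card_insert_of_notMem hR]
    omega

lemma stab_insert_aux (hN : O.Normal) (s : Finset (Subgroup G)) (B : Subgroup G)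
    (hB : B ∈ s) :
    (⨅ P ∈ (insert (O ⊔ B) s : Finset (Subgroup G)), Subgroup.normalizer (P : Set G))
      = ⨅ P ∈ s, Subgroup.normalizer (P : Set G) := by
  apply le_antisymm
  · exact le_iInf₂ fun P hP => iInf₂_le P (Finset.mem_insert_of_mem hP)
  · refine le_iInf₂ fun P hP => ?_
    rcases Finset.mem_insert.mp hP with rfl | hP
    · intro x hx
      have hle : (⨅ P ∈ s, Subgroup.normalizer (P : Set G)) ≤ Subgroup.normalizer (B : Set G) :=
        iInf₂_le B hB
      have hxB : x ∈ Subgroup.normalizer (B : Set G) := hle hx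
      have hxO : x ∈ Subgroup.normalizer (O : Set G) := by
        rw [Subgroup.normalizer_eq_top_iff.mpr hN]; trivial
      exact mem_normalizer_sup hxO hxB
    · exact iInf₂_le P hP

lemma PiChain.next_stab (C : PiChain π G) :
    (C.next hO hN hOpi).stab = C.stab := by
  by_cases hR : O ⊔ C.bnd O ∈ C.carrier
  · have hBmem : C.bnd O ∈ C.carrier.erase (O ⊔ C.bnd O) :=
      Finset.mem_erase.mpr ⟨fun h => C.not_le_bnd hO (h ▸ le_sup_left), C.bnd_mem_carrier hO⟩
    have : C.stab = ⨅ P ∈ C.carrier.erase (O ⊔ C.bnd O), Subgroup.normalizer P := by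
      rw [PiChain.stab]
      conv_lhs => rw [← Finset.insert_erase hR]
      exact stab_insert_aux hN _ (C.bnd O) hBmem
    rw [this, PiChain.stab, C.next_carrier_pos hO hN hOpi hR]
  · rw [PiChain.stab, PiChain.stab, C.next_carrier_neg hO hN hOpi hR,
      stab_insert_aux hN _ (C.bnd O) (C.bnd_mem_carrier hO)]

end ChainOps

/-- If O_π(G) ≠ 1, there is a fixed-point-free involution C ↦ C* on the chains
of π-subgroups of G with |C*| = |C| ± 1 and G_{C*} = G_C. -/
theorem chain_involution (π : Set ℕ) (hπ : ∀ p ∈ π, p.Prime)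
    (G : Type*) [Group G] [Finite G] (h : piCore π G ≠ ⊥) :
    ∃ σ : PiChain π G → PiChain π G,
      (∀ C, σ (σ C) = C) ∧ (∀ C, σ C ≠ C) ∧
      (∀ C, (σ C).len = C.len + 1 ∨ C.len = (σ C).len + 1) ∧
      (∀ C, (σ C).stab = C.stab) := by
  obtain ⟨hN, hOpi⟩ := piCore_spec π G
  exact ⟨fun C => C.next h hN hOpi,
    fun C => C.next_next h hN hOpi,
    fun C => C.next_ne h hN hOpi,
    fun C => C.next_len h hN hOpi,
    fun C => C.next_stab h hN hOpi⟩
end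

section
/- Let G be a finite group with a normal π'-subgroup K. Then every chain of π-subgroups of G/K is the image of a chain of π-subgroups of G under the map sending 1 = P₀ < … < Pₙ to P₀K/K < … < PₙK/K (i.e., the reduction map on chains is surjective). -/
/-- The reduction map on chains of π-subgroups, C ↦ C̄ (memberwise P ↦ PK/K),
is surjective onto the chains of π-subgroups of G/K. -/
theorem chain_reduction_surjective (π : Set ℕ) (hπ : ∀ p ∈ π, p.Prime)
    (G : Type*) [Group G] [Finite G] (K : Subgroup G) [K.Normal]
    (hK : IsPiSubgroup πᶜ K) :
    ∀ D : PiChain π (G ⧸ K), ∃ C : PiChain π G,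
      (D.carrier : Set (Subgroup (G ⧸ K))) =
        (fun P => Subgroup.map (QuotientGroup.mk' K) P) ''
          (C.carrier : Set (Subgroup G)) ∧
      C.len = D.len := by
  classical
  intro D
  -- top element of the chain
  obtain ⟨T, hT, hTmax⟩ := Set.Finite.exists_maximalFor id (D.carrier : Set (Subgroup (G ⧸ K)))
    (D.carrier.finite_toSet) ⟨⊥, D.bot_mem⟩
  have hTtop : ∀ Q ∈ D.carrier, Q ≤ T := by
    intro Q hQ
    rcases D.isChain.total hQ hT with h | h
    · exact h
    · exact hTmax hQ h
  set L : Subgroup G := T.comap (QuotientGroup.mk' K) with hL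
  have hKL : K ≤ L := by
    rw [← QuotientGroup.ker_mk' K]
    intro x hx
    simp only [MonoidHom.mem_ker] at hx
    simp [hL, Subgroup.mem_comap, hx, T.one_mem]
  -- the restricted quotient map
  set φ : L →* G ⧸ K := (QuotientGroup.mk' K).comp L.subtype with hφ
  have hker : φ.ker = K.subgroupOf L := by
    rw [hφ, ← MonoidHom.comap_ker, QuotientGroup.ker_mk']; rfl
  have hrange : φ.range = T := by
    rw [hφ, MonoidHom.range_comp, Subgroup.range_subtype]
    exact Subgroup.map_comap_eq_self_of_surjective (QuotientGroup.mk'_surjective K) T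
  have hidx : (K.subgroupOf L).index = Nat.card T := by
    rw [Subgroup.index, ← hker, Nat.card_congr (QuotientGroup.quotientKerEquivRange φ).toEquiv,
      hrange]
  have hcardK : Nat.card (K.subgroupOf L) = Nat.card K :=
    Nat.card_congr (Subgroup.subgroupOfEquivOfLe hKL).toEquiv
  have hcop : Nat.Coprime (Nat.card (K.subgroupOf L)) (K.subgroupOf L).index := by
    by_contra h
    obtain ⟨p, hp, hp1, hp2⟩ := Nat.Prime.not_coprime_iff_dvd.mp h
    have h1 : p ∈ πᶜ := hK p hp (hcardK ▸ hp1)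
    exact h1 (D.pi T hT p hp (hidx ▸ hp2))
  obtain ⟨H, hH⟩ := Subgroup.exists_right_complement'_of_coprime hcop
  set H' : Subgroup G := H.map L.subtype with hH'
  have hcardH : Nat.card H' = Nat.card T := by
    have e : Nat.card H' = Nat.card H :=
      Nat.card_congr (Subgroup.equivMapOfInjective H L.subtype L.subtype_injective).toEquiv.symm
    have h1 : Nat.card (K.subgroupOf L) * Nat.card H = Nat.card L := hH.card_mul
    have h2 : Nat.card (K.subgroupOf L) * (K.subgroupOf L).index = Nat.card L :=
      (K.subgroupOf L).card_mul_index
    have hpos : 0 < Nat.card (K.subgroupOf L) := Nat.card_pos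
    rw [e, ← hidx]
    exact Nat.eq_of_mul_eq_mul_left hpos (h1.trans h2.symm)
  set f : Subgroup (G ⧸ K) → Subgroup G :=
    fun Q => H' ⊓ Q.comap (QuotientGroup.mk' K) with hf
  have hmono : Monotone f := fun a b hab =>
    inf_le_inf_left _ (Subgroup.comap_mono hab)
  -- key: f is a section on members of D
  have key : ∀ Q ∈ D.carrier, (f Q).map (QuotientGroup.mk' K) = Q := by
    intro Q hQ
    apply le_antisymm
    · calc (f Q).map (QuotientGroup.mk' K)
          ≤ (Q.comap (QuotientGroup.mk' K)).map (QuotientGroup.mk' K) :=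
            Subgroup.map_mono inf_le_right
        _ = Q := Subgroup.map_comap_eq_self_of_surjective (QuotientGroup.mk'_surjective K) Q
    · intro q hq
      obtain ⟨g, rfl⟩ := QuotientGroup.mk'_surjective K q
      have hgL : g ∈ L := by
        have : g ∈ Q.comap (QuotientGroup.mk' K) := hq
        exact Subgroup.comap_mono (hTtop Q hQ) this
      obtain ⟨⟨⟨k, hk⟩, ⟨h, hh⟩⟩, hmul⟩ := (hH.existsUnique (⟨g, hgL⟩ : L)).exists
      have hgeq : g = (k : L) * (h : L) := by
        have := congrArg (Subgroup.subtype L) hmul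
        simpa using this.symm
      have hkK : ((k : L) : G) ∈ K := hk
      have hmk : QuotientGroup.mk' K ((h : L) : G) = QuotientGroup.mk' K g := by
        rw [hgeq]
        simp [QuotientGroup.eq_one_iff, hkK]
      refine ⟨((h : L) : G), ⟨?_, ?_⟩, hmk⟩
      · exact ⟨(h : L), hh, rfl⟩
      · show QuotientGroup.mk' K ((h : L) : G) ∈ Q
        rw [hmk]; exact hq
  have hfbot : f ⊥ = ⊥ := by
    apply le_antisymm _ bot_le
    intro x hx
    obtain ⟨hx1, hx2⟩ := hx
    have hxK : x ∈ K := by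
      simpa [Subgroup.mem_comap, QuotientGroup.eq_one_iff] using hx2
    obtain ⟨y, hy, rfl⟩ := hx1
    have : y ∈ K.subgroupOf L := hxK
    have : y ∈ (K.subgroupOf L) ⊓ H := ⟨this, hy⟩
    rw [hH.disjoint.eq_bot] at this
    have hy1 : y = 1 := by simpa using this
    simp [hy1]
  have hinj : Set.InjOn f (D.carrier : Set (Subgroup (G ⧸ K))) := by
    intro a ha b hb hab
    rw [← key a ha, ← key b hb, hab]
  refine ⟨⟨D.carrier.image f, ?_, ?_, ?_⟩, ?_, ?_⟩
  · rw [← hfbot]; exact Finset.mem_image_of_mem f D.bot_mem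
  · rw [Finset.coe_image]
    exact D.isChain.image_of_map_rel _ _ f (fun _ _ h => hmono h)
  · intro P hP
    simp only [Finset.mem_image] at hP
    obtain ⟨Q, hQ, rfl⟩ := hP
    intro p hp hdvd
    have hle : f Q ≤ H' := inf_le_left
    have : Nat.card (f Q) ∣ Nat.card H' := Subgroup.card_dvd_of_le hle
    exact D.pi T hT p hp (hcardH ▸ this.trans (dvd_refl _) |>.trans (dvd_refl _) |> fun h => hdvd.trans h)
  · rw [Finset.coe_image, Set.image_image]
    ext Q
    constructor
    · intro hQ
      exact ⟨Q, hQ, key Q hQ⟩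
    · rintro ⟨R, hR, rfl⟩
      simpa [key R hR] using hR
  · show (D.carrier.image f).card - 1 = D.carrier.card - 1
    rw [Finset.card_image_of_injOn hinj]
end

section
/- Let G be a finite group, K a normal π'-subgroup of G, and P₁ < P₂ two π-subgroups of G. Then N_G(P₁)K ∩ N_G(P₂)K = (N_G(P₁) ∩ N_G(P₂))K. -/
/-- If K ⊴ G is a π'-subgroup and P₁ < P₂ are π-subgroups of G, then
N_G(P₁)K ∩ N_G(P₂)K = (N_G(P₁) ∩ N_G(P₂))K. -/
theorem normalizer_sup_inf (π : Set ℕ) (hπ : ∀ p ∈ π, p.Prime)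
    (G : Type*) [Group G] [Finite G] (K P₁ P₂ : Subgroup G) [K.Normal]
    (hK : IsPiSubgroup πᶜ K) (h1 : IsPiSubgroup π P₁) (h2 : IsPiSubgroup π P₂)
    (hlt : P₁ < P₂) :
    (Subgroup.normalizer P₁ ⊔ K) ⊓ (Subgroup.normalizer P₂ ⊔ K) =
      (Subgroup.normalizer P₁ ⊓ Subgroup.normalizer P₂) ⊔ K := by
  -- membership in H ⊔ K
  have memsup : ∀ (H : Subgroup G) (x : G),
      x ∈ H ⊔ K ↔ ∃ h ∈ H, ∃ k ∈ K, h * k = x := by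
    intro H x
    rw [← SetLike.mem_coe, Subgroup.mul_normal H K]
    exact Set.mem_mul
  -- K ⊓ P₂ = ⊥
  have hcop : Nat.Coprime (Nat.card K) (Nat.card P₂) := by
    by_contra hc
    obtain ⟨p, hp, hpd⟩ := Nat.exists_prime_and_dvd hc
    exact (hK p hp (hpd.trans (Nat.gcd_dvd_left _ _)))
      (h2 p hp (hpd.trans (Nat.gcd_dvd_right _ _)))
  have hKP2 : K ⊓ P₂ = ⊥ := Subgroup.inf_eq_bot_of_coprime hcop
  -- (P₁ ⊔ K) ⊓ P₂ = P₁
  have hPK : (P₁ ⊔ K) ⊓ P₂ = P₁ := by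
    refine le_antisymm ?_ (le_inf le_sup_left hlt.le)
    rintro x ⟨hx1, hx2⟩
    obtain ⟨p, hp, k, hk, rfl⟩ := (memsup P₁ _).1 hx1
    have hk2 : k ∈ K ⊓ P₂ := ⟨hk, by
      have : p⁻¹ * (p * k) ∈ P₂ := mul_mem (inv_mem (hlt.le hp)) hx2
      simpa using this⟩
    rw [hKP2, Subgroup.mem_bot] at hk2
    simpa [hk2] using hp
  -- conjugation by normalizer elements preserves P₁ ⊔ K
  have hconj : ∀ g ∈ Subgroup.normalizer (P₁ : Set G), ∀ h ∈ P₁ ⊔ K, g * h * g⁻¹ ∈ P₁ ⊔ K := by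
    intro g hg h hh
    obtain ⟨p, hp, k, hk, rfl⟩ := (memsup P₁ _).1 hh
    have h1' : g * p * g⁻¹ ∈ P₁ := (Subgroup.mem_normalizer_iff.1 hg p).1 hp
    have h2' : g * k * g⁻¹ ∈ K := Subgroup.Normal.conj_mem ‹K.Normal› k hk g
    have : g * (p * k) * g⁻¹ = (g * p * g⁻¹) * (g * k * g⁻¹) := by group
    rw [this]
    exact mul_mem (Subgroup.mem_sup_left h1') (Subgroup.mem_sup_right h2')
  have hnorm1 : Subgroup.normalizer (P₁ : Set G) ≤ Subgroup.normalizer ((P₁ ⊔ K : Subgroup G) : Set G) := by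
    intro g hg
    rw [Subgroup.mem_normalizer_iff]
    intro h
    constructor
    · exact hconj g hg h
    · intro hh
      have := hconj g⁻¹ (inv_mem hg) _ hh
      simpa [mul_assoc] using this
  have hKnorm : K ≤ Subgroup.normalizer ((P₁ ⊔ K : Subgroup G) : Set G) := le_sup_right.trans Subgroup.le_normalizer
  -- normalizer of intersection
  have hninf : ∀ (A B : Subgroup G), Subgroup.normalizer (A : Set G) ⊓ Subgroup.normalizer (B : Set G) ≤ Subgroup.normalizer ((A ⊓ B : Subgroup G) : Set G) := by
    intro A B g hg
    obtain ⟨hga, hgb⟩ := Subgroup.mem_inf.mp hg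
    rw [Subgroup.mem_normalizer_iff] at hga hgb ⊢
    intro h
    exact and_congr (hga h) (hgb h)
  refine le_antisymm ?_ (le_inf (sup_le_sup_right inf_le_left K)
    (sup_le_sup_right inf_le_right K))
  rintro x ⟨hx1, hx2⟩
  obtain ⟨n₂, hn₂, k₂, hk₂, rfl⟩ := (memsup (Subgroup.normalizer (P₂ : Set G)) _).1 hx2
  have hx0 : n₂ * k₂ ∈ Subgroup.normalizer ((P₁ ⊔ K : Subgroup G) : Set G) := sup_le hnorm1 hKnorm hx1
  have hn0 : n₂ ∈ Subgroup.normalizer ((P₁ ⊔ K : Subgroup G) : Set G) := by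
    have := mul_mem hx0 (inv_mem (hKnorm hk₂))
    simpa [mul_assoc] using this
  have hn1 : n₂ ∈ Subgroup.normalizer (P₁ : Set G) := by
    have := hninf (P₁ ⊔ K) P₂ ⟨hn0, hn₂⟩
    rwa [hPK] at this
  exact (memsup _ _).2 ⟨n₂, ⟨hn1, hn₂⟩, k₂, hk₂, rfl⟩
end

section
/- Let G be a finite π-separable group with O_π(G) = 1. Then C_G(O_{π'}(G)) ≤ O_{π'}(G). In particular, if additionally O_{π'}(G) is central in G, then G = O_{π'}(G) is a π'-group. -/
/-- `G` is π-separable: it has a (sub)normal series each of whose factors is a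
π-group or a π'-group. -/
def IsPiSeparable (π : Set ℕ) (G : Type*) [Group G] : Prop :=
  ∃ (n : ℕ) (H : Fin (n + 1) → Subgroup G),
    H 0 = ⊥ ∧ H (Fin.last n) = ⊤ ∧
    (∀ i : Fin n, H i.castSucc ≤ H i.succ) ∧
    ∀ i : Fin n, ((H i.castSucc).subgroupOf (H i.succ)).Normal ∧
      (IsPiNumber π (Nat.card (↥(H i.succ) ⧸ (H i.castSucc).subgroupOf (H i.succ))) ∨
       IsPiNumber πᶜ (Nat.card (↥(H i.succ) ⧸ (H i.castSucc).subgroupOf (H i.succ))))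

set_option linter.unusedSectionVars false

namespace HallHigmanAux

open Subgroup

variable {π : Set ℕ}

lemma IsPiNumber.of_dvd {m n : ℕ} (h : IsPiNumber π n) (hd : m ∣ n) : IsPiNumber π m :=
  fun p pp hp => h p pp (hp.trans hd)

lemma IsPiNumber.mul {m n : ℕ} (hm : IsPiNumber π m) (hn : IsPiNumber π n) :
    IsPiNumber π (m * n) :=
  fun p pp hp => ((Nat.Prime.dvd_mul pp).mp hp).elim (hm p pp) (hn p pp)

lemma isPiNumber_coprime {m n : ℕ} (hm : IsPiNumber π m) (hn : IsPiNumber πᶜ n) :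
    Nat.Coprime m n := by
  rw [Nat.coprime_iff_gcd_eq_one]
  by_contra hg
  have pp := Nat.minFac_prime hg
  exact hn _ pp ((Nat.minFac_dvd _).trans (Nat.gcd_dvd_right m n))
    (hm _ pp ((Nat.minFac_dvd _).trans (Nat.gcd_dvd_left m n)))

section PiCore

variable {G : Type*} [Group G] [Finite G]

lemma sup_mem_piSet {H K : Subgroup G} (hH : H.Normal ∧ IsPiSubgroup π H)
    (hK : K.Normal ∧ IsPiSubgroup π K) : (H ⊔ K).Normal ∧ IsPiSubgroup π (H ⊔ K) := by
  obtain ⟨hHn, hHp⟩ := hH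
  obtain ⟨hKn, hKp⟩ := hK
  haveI := hHn; haveI := hKn
  refine ⟨Subgroup.sup_normal H K, ?_⟩
  have h1 : Nat.card ↥(H ⊔ K) =
      Nat.card (↥(H ⊔ K) ⧸ K.subgroupOf (H ⊔ K)) * Nat.card (K.subgroupOf (H ⊔ K)) :=
    Subgroup.card_eq_card_quotient_mul_card_subgroup _
  have h2 : Nat.card (K.subgroupOf (H ⊔ K)) = Nat.card K :=
    Nat.card_congr (Subgroup.subgroupOfEquivOfLe le_sup_right).toEquiv
  have h3 : Nat.card (↥(H ⊔ K) ⧸ K.subgroupOf (H ⊔ K)) = Nat.card (↥H ⧸ K.subgroupOf H) :=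
    (Nat.card_congr (QuotientGroup.quotientInfEquivProdNormalQuotient H K).toEquiv).symm
  have h4 : Nat.card (↥H ⧸ K.subgroupOf H) ∣ Nat.card H := by
    have := Subgroup.index_dvd_card (G := ↥H) (H := K.subgroupOf H)
    rwa [Subgroup.index_eq_card] at this
  have key : Nat.card ↥(H ⊔ K) ∣ Nat.card H * Nat.card K := by
    rw [h1, h2, h3]
    exact Nat.mul_dvd_mul_right h4 (Nat.card K)
  exact IsPiNumber.of_dvd (IsPiNumber.mul hHp hKp) key

lemma piCore_mem : (piCore π G).Normal ∧ IsPiSubgroup π (piCore π G) := by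
  classical
  have hbot : (⊥ : Subgroup G) ∈ {P : Subgroup G | P.Normal ∧ IsPiSubgroup π P} := by
    refine ⟨inferInstance, ?_⟩
    intro p pp hp
    rw [Subgroup.card_bot] at hp
    exact absurd (Nat.dvd_one.mp hp) pp.ne_one
  obtain ⟨M, hMS, hmax⟩ := Set.Finite.exists_maximal
    (s := {P : Subgroup G | P.Normal ∧ IsPiSubgroup π P}) (Set.toFinite _) ⟨⊥, hbot⟩
  have hle : ∀ P ∈ {P : Subgroup G | P.Normal ∧ IsPiSubgroup π P}, P ≤ M := by
    intro P hP
    have := hmax (sup_mem_piSet hMS hP) le_sup_left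
    exact le_sup_right.trans this
  have : piCore π G = M := by
    refine le_antisymm (iSup₂_le hle) ?_
    exact le_biSup (fun (P : Subgroup G) => P) hMS
  rw [this]
  exact hMS

lemma piCore_normal : (piCore π G).Normal := piCore_mem.1

lemma piCore_pi : IsPiSubgroup π (piCore π G) := piCore_mem.2

lemma le_piCore {P : Subgroup G} (hn : P.Normal) (hp : IsPiSubgroup π P) : P ≤ piCore π G := by
  have hmem : P ∈ {P : Subgroup G | P.Normal ∧ IsPiSubgroup π P} := ⟨hn, hp⟩
  exact le_biSup (fun (P : Subgroup G) => P) hmem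

variable {G' : Type*} [Group G'] [Finite G']

lemma piCore_map_le (e : G ≃* G') : (piCore π G).map e.toMonoidHom ≤ piCore π G' := by
  apply le_piCore
  · exact (piCore_normal).map e.toMonoidHom e.surjective
  · show IsPiNumber π _
    have : Nat.card ((piCore π G).map e.toMonoidHom) = Nat.card (piCore π G) :=
      (Nat.card_congr (Subgroup.equivMapOfInjective _ _ e.injective).toEquiv).symm
    rw [this]
    exact piCore_pi

lemma piCore_map (e : G ≃* G') : (piCore π G).map e.toMonoidHom = piCore π G' := by
  refine le_antisymm (piCore_map_le e) ?_
  have h2 := Subgroup.map_mono (f := e.toMonoidHom) (piCore_map_le (π := π) e.symm)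
  rwa [Subgroup.map_map, show e.toMonoidHom.comp e.symm.toMonoidHom = MonoidHom.id G' by
    ext x; simp, Subgroup.map_id] at h2

lemma mem_piCore_of_aut {x : G} (e : G ≃* G) (hx : x ∈ piCore π G) : e x ∈ piCore π G := by
  rw [← piCore_map (π := π) e]
  exact ⟨x, hx, rfl⟩

lemma piCore_transfer {M : Subgroup G} (hM : M.Normal) :
    ((piCore π ↥M).map M.subtype).Normal ∧ IsPiSubgroup π ((piCore π ↥M).map M.subtype) := by
  haveI := hM
  constructor
  · constructor
    intro x hx g
    obtain ⟨m, hm, rfl⟩ := hx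
    refine ⟨MulAut.conjNormal g m, mem_piCore_of_aut (MulAut.conjNormal g) hm, ?_⟩
    simp [MulAut.conjNormal_apply]
  · show IsPiNumber π _
    have : Nat.card ((piCore π ↥M).map M.subtype) = Nat.card (piCore π ↥M) :=
      (Nat.card_congr (Subgroup.equivMapOfInjective _ _ M.subtype_injective).toEquiv).symm
    rw [this]
    exact piCore_pi

end PiCore

section Steps

variable {G : Type*} [Group G] {G' : Type*} [Group G']

lemma step_subgroupOf {A B : Subgroup G} (hN : (A.subgroupOf B).Normal) (K : Subgroup G) :
    ((A.subgroupOf K).subgroupOf (B.subgroupOf K)).Normal ∧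
      Nat.card (↥(B.subgroupOf K) ⧸ (A.subgroupOf K).subgroupOf (B.subgroupOf K)) ∣
        Nat.card (↥B ⧸ A.subgroupOf B) := by
  haveI := hN
  let φ : ↥(B.subgroupOf K) →* ↥B :=
    { toFun := fun x => ⟨(x : ↥K), x.2⟩
      map_one' := rfl
      map_mul' := fun x y => rfl }
  let ψ := (QuotientGroup.mk' (A.subgroupOf B)).comp φ
  have hker : ψ.ker = (A.subgroupOf K).subgroupOf (B.subgroupOf K) := by
    ext x
    simp only [ψ, φ, MonoidHom.mem_ker, MonoidHom.comp_apply, QuotientGroup.mk'_apply,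
      QuotientGroup.eq_one_iff, Subgroup.mem_subgroupOf, MonoidHom.coe_mk, OneHom.coe_mk]
  constructor
  · exact hker ▸ ψ.normal_ker
  · rw [← hker]
    exact Subgroup.card_dvd_of_injective (QuotientGroup.kerLift ψ)
      (QuotientGroup.kerLift_injective ψ)

lemma step_map {A B : Subgroup G} (hAB : A ≤ B) (hN : (A.subgroupOf B).Normal) (f : G →* G') :
    ((A.map f).subgroupOf (B.map f)).Normal ∧
      Nat.card (↥(B.map f) ⧸ (A.map f).subgroupOf (B.map f)) ∣
        Nat.card (↥B ⧸ A.subgroupOf B) := by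
  haveI := hN
  have heq : (A.map f).subgroupOf (B.map f) = (A.subgroupOf B).map (f.subgroupMap B) := by
    ext x
    simp only [Subgroup.mem_subgroupOf, Subgroup.mem_map]
    constructor
    · rintro ⟨a, ha, hax⟩
      refine ⟨⟨a, hAB ha⟩, ?_, ?_⟩
      · simpa [Subgroup.mem_subgroupOf] using ha
      · exact Subtype.ext hax
    · rintro ⟨b, hb, rfl⟩
      exact ⟨(b : G), hb, rfl⟩
  have hnorm : ((A.map f).subgroupOf (B.map f)).Normal := by
    rw [heq]
    exact hN.map _ (f.subgroupMap_surjective B)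
  refine ⟨hnorm, ?_⟩
  haveI := hnorm
  let ψ := (QuotientGroup.mk' ((A.map f).subgroupOf (B.map f))).comp (f.subgroupMap B)
  have hψ : Function.Surjective ψ :=
    (QuotientGroup.mk'_surjective _).comp (f.subgroupMap_surjective B)
  have hcond : ∀ x ∈ A.subgroupOf B, ψ x = 1 := by
    intro x hx
    rw [Subgroup.mem_subgroupOf] at hx
    show QuotientGroup.mk' _ (f.subgroupMap B x) = 1
    rw [QuotientGroup.mk'_apply, QuotientGroup.eq_one_iff, Subgroup.mem_subgroupOf]
    exact ⟨(x : G), hx, rfl⟩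
  have hlift : Function.Surjective (QuotientGroup.lift (A.subgroupOf B) ψ hcond) := by
    intro y
    obtain ⟨x, rfl⟩ := hψ y
    exact ⟨QuotientGroup.mk x, rfl⟩
  exact Subgroup.card_dvd_of_surjective _ hlift

end Steps

section Separable

variable {G : Type*} [Group G] {G' : Type*} [Group G']

lemma piSeparable_subgroup (hsep : IsPiSeparable π G) (K : Subgroup G) :
    IsPiSeparable π ↥K := by
  obtain ⟨n, H, h0, htop, hmono, hstep⟩ := hsep
  refine ⟨n, fun i => (H i).subgroupOf K, ?_, ?_, ?_, ?_⟩
  · show (H 0).subgroupOf K = ⊥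
    rw [h0, Subgroup.bot_subgroupOf]
  · show (H (Fin.last n)).subgroupOf K = ⊤
    rw [htop, Subgroup.top_subgroupOf]
  · intro i x hx
    rw [Subgroup.mem_subgroupOf] at hx ⊢
    exact hmono i hx
  · intro i
    obtain ⟨hn, hfac⟩ := hstep i
    obtain ⟨sn, sd⟩ := step_subgroupOf hn K
    exact ⟨sn, hfac.elim (fun hh => Or.inl (IsPiNumber.of_dvd hh sd)) (fun hh => Or.inr (IsPiNumber.of_dvd hh sd))⟩

lemma piSeparable_quotient (hsep : IsPiSeparable π G) (f : G →* G')
    (hf : Function.Surjective f) : IsPiSeparable π G' := by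
  obtain ⟨n, H, h0, htop, hmono, hstep⟩ := hsep
  refine ⟨n, fun i => (H i).map f, ?_, ?_, ?_, ?_⟩
  · show (H 0).map f = ⊥
    rw [h0, Subgroup.map_bot]
  · show (H (Fin.last n)).map f = ⊤
    rw [htop, Subgroup.map_top_of_surjective f hf]
  · intro i
    exact Subgroup.map_mono (hmono i)
  · intro i
    obtain ⟨hn, hfac⟩ := hstep i
    obtain ⟨sn, sd⟩ := step_map (hmono i) hn f
    exact ⟨sn, hfac.elim (fun hh => Or.inl (IsPiNumber.of_dvd hh sd)) (fun hh => Or.inr (IsPiNumber.of_dvd hh sd))⟩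

end Separable

section Dichotomy

universe u

lemma dichotomy : ∀ (n : ℕ) (G : Type u) [Group G] [Finite G]
    (H : Fin (n + 1) → Subgroup G),
    H 0 = ⊥ → H (Fin.last n) = ⊤ →
    (∀ i : Fin n, H i.castSucc ≤ H i.succ) →
    (∀ i : Fin n, ((H i.castSucc).subgroupOf (H i.succ)).Normal ∧
      (IsPiNumber π (Nat.card (↥(H i.succ) ⧸ (H i.castSucc).subgroupOf (H i.succ))) ∨
       IsPiNumber πᶜ (Nat.card (↥(H i.succ) ⧸ (H i.castSucc).subgroupOf (H i.succ))))) →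
    Nontrivial G → piCore π G ≠ ⊥ ∨ piCore πᶜ G ≠ ⊥ := by
  intro n
  induction n with
  | zero =>
    intro G _ _ H h0 htop _ _ hnt
    exfalso
    obtain ⟨x, hx⟩ := exists_ne (1 : G)
    have hmem : x ∈ (⊥ : Subgroup G) := by
      rw [← h0, show (0 : Fin 1) = Fin.last 0 from rfl, htop]
      trivial
    exact hx (Subgroup.mem_bot.mp hmem)
  | succ n ih =>
    intro G _ _ H h0 htop hmono hstep hnt
    by_cases hM : H (Fin.last n).castSucc = ⊤
    · refine ih G (fun i => H i.castSucc) ?_ hM ?_ ?_ hnt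
      · show H (0 : Fin (n+1)).castSucc = ⊥
        rw [show ((0 : Fin (n+1)).castSucc) = (0 : Fin (n+2)) from rfl, h0]
      · intro i
        show H i.castSucc.castSucc ≤ H i.succ.castSucc
        have h := hmono i.castSucc
        rwa [Fin.succ_castSucc] at h
      · intro i
        have hs := hstep i.castSucc
        rwa [Fin.succ_castSucc] at hs
    · have hMn : (H (Fin.last n).castSucc).Normal := by
        have hn := (hstep (Fin.last n)).1
        rw [Fin.succ_last, htop] at hn
        constructor
        intro m hm g
        have h2 := hn.conj_mem ⟨m, Subgroup.mem_top m⟩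
          (by simpa [Subgroup.mem_subgroupOf] using hm) ⟨g, Subgroup.mem_top g⟩
        simpa [Subgroup.mem_subgroupOf] using h2
      have hconc : ∀ σ : Set ℕ, IsPiNumber σ (Nat.card G) → piCore σ G ≠ ⊥ := by
        intro σ hh hcontra
        obtain ⟨x, hx⟩ := exists_ne (1 : G)
        have htop_le : (⊤ : Subgroup G) ≤ piCore σ G := by
          refine le_piCore inferInstance ?_
          show IsPiNumber σ (Nat.card ↥(⊤ : Subgroup G))
          have hc : Nat.card ↥(⊤ : Subgroup G) = Nat.card G :=
            Nat.card_congr Subgroup.topEquiv.toEquiv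
          rw [hc]; exact hh
        have hxx := htop_le (Subgroup.mem_top x)
        rw [hcontra] at hxx
        exact hx (Subgroup.mem_bot.mp hxx)
      by_cases hMbot : H (Fin.last n).castSucc = ⊥
      · have hfac := (hstep (Fin.last n)).2
        rw [Fin.succ_last, htop, hMbot] at hfac
        have hiso : Nat.card (↥(⊤ : Subgroup G) ⧸ ((⊥ : Subgroup G).subgroupOf ⊤)) =
            Nat.card G := by
          rw [Subgroup.bot_subgroupOf]
          exact Nat.card_congr ((QuotientGroup.quotientBot (G := ↥(⊤ : Subgroup G))).toEquiv.trans
            Subgroup.topEquiv.toEquiv)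
        rw [hiso] at hfac
        exact hfac.elim (fun hh => Or.inl (hconc π hh)) (fun hh => Or.inr (hconc πᶜ hh))
      · have hMnt : Nontrivial ↥(H (Fin.last n).castSucc) := by
          obtain ⟨a, ha⟩ := Subgroup.ne_bot_iff_exists_ne_one.mp hMbot
          exact ⟨a, 1, ha⟩
        have hres := ih ↥(H (Fin.last n).castSucc)
          (fun i => (H i.castSucc).subgroupOf (H (Fin.last n).castSucc)) ?_ ?_ ?_ ?_ hMnt
        · have htrans : ∀ σ : Set ℕ, piCore σ ↥(H (Fin.last n).castSucc) ≠ ⊥ →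
              piCore σ G ≠ ⊥ := by
            intro σ hσ hcontra
            obtain ⟨tn, tp⟩ := piCore_transfer (π := σ) hMn
            have hle := le_piCore tn tp
            rw [hcontra, le_bot_iff] at hle
            exact hσ (Subgroup.map_injective
              (Subgroup.subtype_injective (H (Fin.last n).castSucc))
              (hle.trans (Subgroup.map_bot _).symm))
          exact hres.elim (fun hh => Or.inl (htrans π hh)) (fun hh => Or.inr (htrans πᶜ hh))
        · show (H (0 : Fin (n+1)).castSucc).subgroupOf _ = ⊥
          rw [show ((0 : Fin (n+1)).castSucc) = (0 : Fin (n+2)) from rfl, h0,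
            Subgroup.bot_subgroupOf]
        · exact Subgroup.subgroupOf_self _
        · intro i
          show (H i.castSucc.castSucc).subgroupOf _ ≤ (H i.succ.castSucc).subgroupOf _
          have h := hmono i.castSucc
          rw [Fin.succ_castSucc] at h
          intro x hx
          rw [Subgroup.mem_subgroupOf] at hx ⊢
          exact h hx
        · intro i
          have hs := hstep i.castSucc
          rw [Fin.succ_castSucc] at hs
          obtain ⟨sn, sd⟩ := step_subgroupOf hs.1 (H (Fin.last n).castSucc)
          exact ⟨sn, hs.2.elim (fun hh => Or.inl (IsPiNumber.of_dvd hh sd))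
            (fun hh => Or.inr (IsPiNumber.of_dvd hh sd))⟩

lemma dichotomy' {G : Type u} [Group G] [Finite G] (hsep : IsPiSeparable π G)
    (hnt : Nontrivial G) : piCore π G ≠ ⊥ ∨ piCore πᶜ G ≠ ⊥ := by
  obtain ⟨n, H, h0, htop, hmono, hstep⟩ := hsep
  exact dichotomy n G H h0 htop hmono hstep hnt

end Dichotomy

section KeyStep

variable {G : Type*} [Group G] [Finite G]

lemma key_step {σ : Set ℕ} {D E : Subgroup G} (hD : D.Normal) (hE : E.Normal) (hDE : D ≤ E)
    (hmin : ∀ X : Subgroup G, X.Normal → D < X → X ≤ E → X = E)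
    (hσ : piCore σ (↥E ⧸ D.subgroupOf E) ≠ ⊥) :
    IsPiNumber σ (Nat.card (↥E ⧸ D.subgroupOf E)) := by
  haveI := hE
  haveI : (D.subgroupOf E).Normal := hD.subgroupOf E
  set K' : Subgroup ↥E :=
    (piCore σ (↥E ⧸ D.subgroupOf E)).comap (QuotientGroup.mk' (D.subgroupOf E)) with hK'def
  have hD_le_KG : D ≤ K'.map E.subtype := by
    intro d hd
    refine ⟨⟨d, hDE hd⟩, ?_, rfl⟩
    show QuotientGroup.mk' (D.subgroupOf E) ⟨d, hDE hd⟩ ∈ piCore σ _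
    have h1 : (QuotientGroup.mk' (D.subgroupOf E)) ⟨d, hDE hd⟩ = 1 := by
      rw [QuotientGroup.mk'_apply, QuotientGroup.eq_one_iff, Subgroup.mem_subgroupOf]
      exact hd
    rw [h1]; exact one_mem _
  have hD_lt_KG : D < K'.map E.subtype := by
    obtain ⟨q, hq1⟩ := Subgroup.ne_bot_iff_exists_ne_one.mp hσ
    obtain ⟨x, hxval⟩ := QuotientGroup.mk'_surjective (D.subgroupOf E) (q : _)
    refine lt_of_le_of_ne hD_le_KG ?_
    intro hcontra
    have hx : (x : G) ∈ K'.map E.subtype := by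
      refine ⟨x, ?_, rfl⟩
      show QuotientGroup.mk' (D.subgroupOf E) x ∈ piCore σ _
      rw [hxval]; exact q.2
    rw [← hcontra] at hx
    have hone : QuotientGroup.mk' (D.subgroupOf E) x = 1 := by
      rw [QuotientGroup.mk'_apply, QuotientGroup.eq_one_iff, Subgroup.mem_subgroupOf]
      exact hx
    exact hq1 (Subtype.ext (by rw [← hxval, hone]; rfl))
  have hKGn : (K'.map E.subtype).Normal := by
    constructor
    intro k hk g
    obtain ⟨x, hx, rfl⟩ := hk
    have hmapN : (D.subgroupOf E).map (MulAut.conjNormal g).toMonoidHom = D.subgroupOf E := by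
      ext z
      simp only [Subgroup.mem_map, Subgroup.mem_subgroupOf]
      constructor
      · rintro ⟨w, hw, rfl⟩
        show (((MulAut.conjNormal g) w : ↥E) : G) ∈ D
        rw [MulAut.conjNormal_apply]
        exact hD.conj_mem _ hw g
      · intro hz
        refine ⟨(MulAut.conjNormal g)⁻¹ z, ?_, ?_⟩
        · show ((((MulAut.conjNormal g))⁻¹ z : ↥E) : G) ∈ D
          rw [MulAut.conjNormal_inv_apply]
          have h3 := hD.conj_mem _ hz g⁻¹
          simpa using h3
        · show (MulAut.conjNormal g) (((MulAut.conjNormal g))⁻¹ z) = z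
          simp
    refine ⟨(MulAut.conjNormal g) x, ?_, ?_⟩
    · show QuotientGroup.mk' (D.subgroupOf E) ((MulAut.conjNormal g) x) ∈ piCore σ _
      rw [← QuotientGroup.congr_mk' (D.subgroupOf E) (D.subgroupOf E)
        (MulAut.conjNormal g) hmapN x]
      rw [← piCore_map (π := σ)
        (QuotientGroup.congr (D.subgroupOf E) (D.subgroupOf E) (MulAut.conjNormal g) hmapN)]
      exact ⟨_, hx, rfl⟩
    · show (((MulAut.conjNormal g) x : ↥E) : G) = g * _ * g⁻¹
      rw [MulAut.conjNormal_apply]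
      rfl
  have hKGE : K'.map E.subtype = E := hmin _ hKGn hD_lt_KG (Subgroup.map_subtype_le K')
  have hK' : K' = ⊤ := by
    apply Subgroup.map_injective (Subgroup.subtype_injective E)
    rw [hKGE, ← MonoidHom.range_eq_map, Subgroup.range_subtype]
  have hQtop : piCore σ (↥E ⧸ D.subgroupOf E) = ⊤ := by
    have h1 := Subgroup.map_comap_eq_self_of_surjective
      (f := QuotientGroup.mk' (D.subgroupOf E)) (QuotientGroup.mk'_surjective _)
      (piCore σ (↥E ⧸ D.subgroupOf E))
    rw [← h1]
    show (K').map _ = ⊤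
    rw [hK', ← MonoidHom.range_eq_map]
    exact MonoidHom.range_eq_top_of_surjective _ (QuotientGroup.mk'_surjective _)
  have hpi : IsPiSubgroup σ (piCore σ (↥E ⧸ D.subgroupOf E)) := piCore_pi
  rw [hQtop] at hpi
  have hc : Nat.card ↥(⊤ : Subgroup (↥E ⧸ D.subgroupOf E)) =
      Nat.card (↥E ⧸ D.subgroupOf E) := Nat.card_congr Subgroup.topEquiv.toEquiv
  show IsPiNumber σ _
  rw [← hc]
  exact hpi

end KeyStep

end HallHigmanAux


open HallHigmanAux Subgroup in
/-- Hall–Higman 1.2.3 lemma: if G is π-separable with O_π(G) = 1, then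
C_G(O_{π'}(G)) ≤ O_{π'}(G); in particular if O_{π'}(G) is central then
G = O_{π'}(G). -/
theorem hall_higman (π : Set ℕ) (hπ : ∀ p ∈ π, p.Prime)
    (G : Type*) [Group G] [Finite G] (hsep : IsPiSeparable π G)
    (h : piCore π G = ⊥) :
    Subgroup.centralizer (piCore πᶜ G : Set G) ≤ piCore πᶜ G ∧
      (piCore πᶜ G ≤ Subgroup.center G → piCore πᶜ G = ⊤) := by
  classical
  have hFn : (piCore πᶜ G).Normal := piCore_normal
  have hFpi : IsPiSubgroup πᶜ (piCore πᶜ G) := piCore_pi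
  have key : Subgroup.centralizer (piCore πᶜ G : Set G) ≤ piCore πᶜ G := by
    by_contra hkey
    have hCn : (Subgroup.centralizer (piCore πᶜ G : Set G)).Normal := by
      constructor
      intro c hc g
      rw [Subgroup.mem_centralizer_iff] at hc ⊢
      intro f hf
      have hmem : g⁻¹ * f * g ∈ piCore πᶜ G := by
        have := hFn.conj_mem f hf g⁻¹
        simpa using this
      have hcomm := hc (g⁻¹ * f * g) hmem
      calc f * (g * c * g⁻¹) = g * (g⁻¹ * f * g * c) * g⁻¹ := by group
        _ = g * (c * (g⁻¹ * f * g)) * g⁻¹ := by rw [hcomm]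
        _ = g * c * g⁻¹ * f := by group
    set D := Subgroup.centralizer (piCore πᶜ G : Set G) ⊓ piCore πᶜ G with hDdef
    have hDn : D.Normal := Subgroup.normal_inf_normal _ _ (hH := hCn) (hK := hFn)
    have hDltC : D < Subgroup.centralizer (piCore πᶜ G : Set G) :=
      lt_of_le_of_ne inf_le_left (fun hco => hkey (le_of_eq hco.symm |>.trans inf_le_right))
    obtain ⟨E, hES, hEmin⟩ := Set.Finite.exists_minimal
      (s := {X : Subgroup G | X.Normal ∧ D < X ∧ X ≤ Subgroup.centralizer (piCore πᶜ G : Set G)})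
      (Set.toFinite _) ⟨_, hCn, hDltC, le_rfl⟩
    obtain ⟨hEn, hDE, hEC⟩ := hES
    have hDEle : D ≤ E := hDE.le
    haveI := hEn
    haveI hNnormal : (D.subgroupOf E).Normal := hDn.subgroupOf E
    have hQsep : IsPiSeparable π (↥E ⧸ D.subgroupOf E) :=
      piSeparable_quotient (piSeparable_subgroup hsep E) (QuotientGroup.mk' _)
        (QuotientGroup.mk'_surjective _)
    have hQnt : Nontrivial (↥E ⧸ D.subgroupOf E) := by
      obtain ⟨x, hxE, hxD⟩ := SetLike.exists_of_lt hDE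
      refine ⟨QuotientGroup.mk' _ ⟨x, hxE⟩, 1, ?_⟩
      rw [Ne, QuotientGroup.mk'_apply, QuotientGroup.eq_one_iff, Subgroup.mem_subgroupOf]
      exact hxD
    have hmin : ∀ X : Subgroup G, X.Normal → D < X → X ≤ E → X = E := by
      intro X hXn hDX hXE
      exact le_antisymm hXE (hEmin ⟨hXn, hDX, hXE.trans hEC⟩ hXE)
    have hdi := dichotomy' hQsep hQnt
    have hQnum : IsPiNumber π (Nat.card (↥E ⧸ D.subgroupOf E)) ∨
        IsPiNumber πᶜ (Nat.card (↥E ⧸ D.subgroupOf E)) := by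
      rcases hdi with h1 | h1
      · exact Or.inl (key_step hDn hEn hDEle hmin h1)
      · exact Or.inr (key_step hDn hEn hDEle hmin h1)
    have hcardN : Nat.card (D.subgroupOf E) = Nat.card D :=
      Nat.card_congr (Subgroup.subgroupOfEquivOfLe hDEle).toEquiv
    have hDpi' : IsPiNumber πᶜ (Nat.card D) :=
      IsPiNumber.of_dvd hFpi (Subgroup.card_dvd_of_le inf_le_right)
    have hNpi' : IsPiNumber πᶜ (Nat.card (D.subgroupOf E)) := by
      rw [hcardN]; exact hDpi'
    have hcardE : Nat.card ↥E =
        Nat.card (↥E ⧸ D.subgroupOf E) * Nat.card (D.subgroupOf E) :=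
      Subgroup.card_eq_card_quotient_mul_card_subgroup _
    rcases hQnum with hQpi | hQpi'
    · -- π case: Schur–Zassenhaus
      have hcop : Nat.Coprime (Nat.card (D.subgroupOf E)) ((D.subgroupOf E).index) := by
        rw [Subgroup.index_eq_card]
        exact (isPiNumber_coprime hQpi hNpi').symm
      obtain ⟨P, hP⟩ := Subgroup.exists_right_complement'_of_coprime hcop
      have hcardP : Nat.card P = Nat.card (↥E ⧸ D.subgroupOf E) := by
        have h1 := hP.card_mul
        rw [hcardE] at h1
        have hpos : 0 < Nat.card (D.subgroupOf E) := Nat.card_pos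
        exact Nat.eq_of_mul_eq_mul_left hpos (by rw [h1]; ring)
      -- D is central in E
      have hcomm : ∀ d ∈ D, ∀ e ∈ E, d * e = e * d := by
        intro d hd e he
        exact (Subgroup.mem_centralizer_iff.mp (hEC he)) d (Subgroup.mem_inf.mp hd).2
      have hPn : P.Normal := by
        constructor
        intro p hp g
        obtain ⟨⟨nn, p'⟩, hg, -⟩ := hP.existsUnique g
        have hn_central : ∀ z : ↥E, ((nn : ↥E) : ↥E) * z = z * nn := by
          intro z
          exact Subtype.ext (hcomm _ (nn.2) _ z.2)
        have hstep1 : g * p * g⁻¹ = (nn : ↥E) * ((p' : ↥E) * p * (p' : ↥E)⁻¹) * (nn : ↥E)⁻¹ := by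
          rw [← hg]; group
        have hstep2 : ((nn : ↥E) : ↥E) * ((p' : ↥E) * p * (p' : ↥E)⁻¹) * (nn : ↥E)⁻¹ =
            (p' : ↥E) * p * (p' : ↥E)⁻¹ := by
          rw [hn_central]; group
        rw [hstep1, hstep2]
        exact mul_mem (mul_mem p'.2 hp) (inv_mem p'.2)
      have hPpi : IsPiSubgroup π P := by
        show IsPiNumber π _
        rw [hcardP]; exact hQpi
      have hPle : P ≤ piCore π ↥E := le_piCore hPn hPpi
      have hRQ : Nat.card (piCore π ↥E) ∣ Nat.card (↥E ⧸ D.subgroupOf E) := by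
        have hcop2 : Nat.Coprime (Nat.card (piCore π ↥E)) (Nat.card (D.subgroupOf E)) :=
          isPiNumber_coprime piCore_pi hNpi'
        have hinj : Function.Injective
            ((QuotientGroup.mk' (D.subgroupOf E)).comp (piCore π ↥E).subtype) := by
          rw [← MonoidHom.ker_eq_bot_iff]
          rw [eq_bot_iff]
          intro a ha
          rw [MonoidHom.mem_ker, MonoidHom.comp_apply, QuotientGroup.mk'_apply,
            QuotientGroup.eq_one_iff] at ha
          have hmem2 : (a : ↥E) ∈ piCore π ↥E ⊓ D.subgroupOf E := ⟨a.2, ha⟩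
          have hbot2 : piCore π ↥E ⊓ D.subgroupOf E = ⊥ := by
            rw [← Subgroup.card_eq_one]
            have d1 := Subgroup.card_dvd_of_le (inf_le_left :
              piCore π ↥E ⊓ D.subgroupOf E ≤ _)
            have d2 := Subgroup.card_dvd_of_le (inf_le_right :
              piCore π ↥E ⊓ D.subgroupOf E ≤ _)
            have := Nat.dvd_gcd d1 d2
            rwa [Nat.Coprime.gcd_eq_one hcop2, Nat.dvd_one] at this
          rw [hbot2] at hmem2
          exact Subgroup.mem_bot.mpr (Subtype.ext (Subgroup.mem_bot.mp hmem2))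
        exact Subgroup.card_dvd_of_injective _ hinj
      have hcardRP : Nat.card (piCore π ↥E) = Nat.card P :=
        Nat.dvd_antisymm (by rw [hcardP]; exact hRQ) (Subgroup.card_dvd_of_le hPle)
      have hPR : P = piCore π ↥E := by
        apply SetLike.coe_injective
        refine Set.eq_of_subset_of_ncard_le hPle ?_ (Set.toFinite _)
        rw [← Nat.card_coe_set_eq, ← Nat.card_coe_set_eq]
        simp only [SetLike.coe_sort_coe]
        rw [hcardRP]
      obtain ⟨tn, tp⟩ := piCore_transfer (π := π) hEn
      have hle := le_piCore tn tp
      rw [h, le_bot_iff] at hle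
      have hPbot : piCore π ↥E = ⊥ :=
        Subgroup.map_injective (Subgroup.subtype_injective E)
          (hle.trans (Subgroup.map_bot _).symm)
      rw [← hPR] at hPbot
      rw [hPbot] at hcardP
      rw [Subgroup.card_bot] at hcardP
      have h1lt : 1 < Nat.card (↥E ⧸ D.subgroupOf E) := Finite.one_lt_card
      omega
    · -- π' case
      have hcardE' : IsPiNumber πᶜ (Nat.card ↥E) := by
        rw [hcardE]
        exact IsPiNumber.mul hQpi' hNpi'
      have hEF : E ≤ piCore πᶜ G := le_piCore hEn hcardE'
      have hED : E ≤ D := le_inf hEC hEF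
      exact absurd hED hDE.not_ge
  refine ⟨key, ?_⟩
  intro hcen
  have hCtop : Subgroup.centralizer (piCore πᶜ G : Set G) = ⊤ := by
    rw [eq_top_iff]
    intro g _
    rw [Subgroup.mem_centralizer_iff]
    intro f hf
    exact (Subgroup.mem_center_iff.mp (hcen hf) g).symm
  rw [hCtop] at key
  exact top_le_iff.mp key
end
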